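/- There is an absolute constant C > 0 (independent of all parameters) such that, under the stated setup and assumptions, |⟨ŵ, v⟩ − ⟨ŵ^{(δ)}, v⟩| ≤ C·(√k + 1)^{d − d_δ}·C_α·ε^{(δ)} for every v ∈ 𝒱. -/

import Mathlib

open scoped RealInnerProductSpace

set_option maxHeartbeats 1000000 in
/-- Lemma 3.4: there is an absolute constant C > 0 such that,
under the stated setup, any solution ŵ of the full estimated system and the
minimum-norm solution ŵ^{(δ)} of the truncated estimated system satisfy
|⟨ŵ, v⟩ − ⟨ŵ^{(δ)}, v⟩| ≤ C·(√k + 1)^{d − d_δ}·C_α·ε^{(δ)} for every v ∈ 𝒱. -/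
theorem stmt12 : ∃ C : ℝ, 0 < C ∧
    ∀ (k : ℕ), 1 ≤ k →
    ∀ (𝒱 : Set (EuclideanSpace ℝ (Fin k))), 𝒱.Nonempty →
    ∀ (CV : ℝ), 1 ≤ CV → (∀ v ∈ 𝒱, ‖v‖ ≤ CV) →
    ∀ (d dδ : ℕ), 1 ≤ dδ → dδ ≤ d → d ≤ k →
    ∀ (V : ℕ → EuclideanSpace ℝ (Fin k)), (∀ i, 1 ≤ i → i ≤ d → V i ∈ 𝒱) →
    ∀ (Cα εα δ : ℝ), 1 ≤ Cα → 0 ≤ εα → 0 < δ →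
    ∀ (α αhat : ℕ → ℝ),
      (∀ i, 2 ≤ i → i ≤ d → α i ∈ Set.Icc 0 Cα) →
      (∀ i, 2 ≤ i → i ≤ d → αhat i ∈ Set.Icc 0 Cα) →
      (∀ i, 2 ≤ i → i ≤ d → |αhat i - α i| ≤ εα) →
    ∀ (u : ℕ → EuclideanSpace ℝ (Fin k)),
      (∀ i, 2 ≤ i → i ≤ dδ → ‖u i‖ = 1) →
      (∀ i, 2 ≤ i → i ≤ dδ → ∀ j, 1 ≤ j → j < i → ⟪u i, V j⟫ = 0) →
      (∀ i, 2 ≤ i → i ≤ dδ → δ ≤ |⟪V i, u i⟫|) →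
    LinearIndependent ℝ (fun i : Fin d => V (i.val + 1)) →
    (∀ v ∈ 𝒱, v ∈ Submodule.span ℝ (V '' Set.Icc 1 d)) →
    ∀ (ψ : ℕ → EuclideanSpace ℝ (Fin k)),
      (∀ i, dδ < i → i ≤ d → ‖ψ i‖ = 1) →
      (∀ i, dδ < i → i ≤ d → ψ i ∈ Submodule.span ℝ (V '' Set.Icc 1 i)) →
      (∀ i, dδ < i → i ≤ d → ∀ j, 1 ≤ j → j < i → ⟪ψ i, V j⟫ = 0) →
      (∀ i, dδ < i → i ≤ d → 0 < ⟪V i, ψ i⟫) →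
      (∀ i, dδ < i → i ≤ d → ∀ v ∈ 𝒱, |⟪v, ψ i⟫| ≤ Real.sqrt k * |⟪V i, ψ i⟫|) →
    (∀ v ∈ 𝒱,
      ‖v - (Submodule.orthogonalProjection (Submodule.span ℝ (V '' Set.Icc 1 dδ)) v :
        EuclideanSpace ℝ (Fin k))‖ ≤ Real.sqrt k * δ) →
    ∀ (w' : EuclideanSpace ℝ (Fin k)),
      ⟪V 1, w'⟫ = 1 →
      (∀ i, 2 ≤ i → i ≤ d → ⟪α i • V 1 - V i, w'⟫ = 0) →
    ∀ (εδ : ℝ),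
      εδ = Cα * CV ^ 4 * (dδ : ℝ) ^ ((3 : ℝ) / 2) * ‖w'‖ ^ 2 * εα / δ ^ 2
        + Real.sqrt k * δ * ‖w'‖ →
    ∀ (whatδ : EuclideanSpace ℝ (Fin k)),
      (⟪V 1, whatδ⟫ = 1 ∧ ∀ i, 2 ≤ i → i ≤ dδ → ⟪αhat i • V 1 - V i, whatδ⟫ = 0) →
      (∀ x : EuclideanSpace ℝ (Fin k),
        (⟪V 1, x⟫ = 1 ∧ ∀ i, 2 ≤ i → i ≤ dδ → ⟪αhat i • V 1 - V i, x⟫ = 0) →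
        ‖whatδ‖ ≤ ‖x‖) →
      ‖whatδ‖ ≤ (3 / 2) * ‖w'‖ →
      (∀ v ∈ 𝒱, |⟪whatδ, v⟫ - ⟪w', v⟫| ≤ εδ) →
    ∀ (what : EuclideanSpace ℝ (Fin k)),
      (⟪V 1, what⟫ = 1 ∧ ∀ i, 2 ≤ i → i ≤ d → ⟪αhat i • V 1 - V i, what⟫ = 0) →
    ∀ v ∈ 𝒱,
      |⟪what, v⟫ - ⟪whatδ, v⟫| ≤
        C * (Real.sqrt k + 1) ^ (d - dδ) * Cα * εδ := by
  refine ⟨3, by norm_num, ?_⟩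
  intro k hk 𝒱 _h𝒱ne CV hCV h𝒱CV d dδ hdδ1 hdδd hdk V hV Cα εα δ hCα hεα hδ
    α αhat hα hαhat hαdiff u _hu1 _hu2 _hu3 _hVli hVspan ψ _hψ1 _hψspan hψorth hψpos hψbd
    _hproj w' hw'1 hw'2 εδ hεδdef whatδ hwδsys _hwδmin _hwδnorm hwδv what hwsys v hv
  obtain ⟨hwδ1, hwδ2⟩ := hwδsys
  obtain ⟨hw1, hw2⟩ := hwsys
  set s : ℝ := Real.sqrt k with hs
  have hs1 : (1 : ℝ) ≤ s := by
    rw [hs, show (1:ℝ) = Real.sqrt 1 by simp]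
    exact Real.sqrt_le_sqrt (by exact_mod_cast hk)
  have hs0 : 0 < s := lt_of_lt_of_le one_pos hs1
  set x : ℝ := s + 1 with hx
  have hx1 : (1:ℝ) ≤ x := by rw [hx]; linarith
  have hx0 : (0:ℝ) < x := lt_of_lt_of_le one_pos hx1
  -- norm of w' lower bound
  have hV1 : V 1 ∈ 𝒱 := hV 1 le_rfl (le_trans hdδ1 hdδd)
  have hw'CV : 1 ≤ CV * ‖w'‖ := by
    have h1 : |⟪V 1, w'⟫| ≤ ‖V 1‖ * ‖w'‖ := abs_real_inner_le_norm _ _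
    rw [hw'1] at h1
    simp only [abs_one] at h1
    have h2 : ‖V 1‖ ≤ CV := h𝒱CV _ hV1
    nlinarith [norm_nonneg w', norm_nonneg (V 1)]
  have hw'0 : 0 < ‖w'‖ := by nlinarith
  have hX1 : (1:ℝ) ≤ (dδ : ℝ) ^ ((3:ℝ)/2) := by
    calc (1:ℝ) = (1:ℝ) ^ ((3:ℝ)/2) := (Real.one_rpow _).symm
    _ ≤ (dδ : ℝ) ^ ((3:ℝ)/2) :=
      Real.rpow_le_rpow (by norm_num) (by exact_mod_cast hdδ1) (by norm_num)
  have hterm1 : 0 ≤ Cα * CV ^ 4 * (dδ : ℝ) ^ ((3:ℝ)/2) * ‖w'‖ ^ 2 * εα / δ ^ 2 := by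
    apply div_nonneg _ (le_of_lt (by positivity : (0:ℝ) < δ ^ 2))
    refine mul_nonneg (mul_nonneg (mul_nonneg (mul_nonneg ?_ ?_) ?_) ?_) hεα
    · linarith
    · positivity
    · exact Real.rpow_nonneg (Nat.cast_nonneg _) _
    · exact sq_nonneg _
  have hterm2 : 0 ≤ s * δ * ‖w'‖ :=
    mul_nonneg (mul_nonneg (le_of_lt hs0) (le_of_lt hδ)) (le_of_lt hw'0)
  have hεδ0 : 0 ≤ εδ := by rw [hεδdef]; linarith
  -- key bound on |αhat i - α i| relative to εδ
  have hαbd : ∀ i, 2 ≤ i → i ≤ d → |αhat i - α i| ≤ 2 * Cα * εδ := by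
    intro i h2 hid
    rcases le_or_gt δ CV with hcase | hcase
    · -- εα ≤ εδ
      have hεαεδ : εα ≤ εδ := by
        rw [hεδdef]
        have h2' : εα ≤ Cα * CV ^ 4 * (dδ : ℝ) ^ ((3:ℝ)/2) * ‖w'‖ ^ 2 * εα / δ ^ 2 := by
          rw [le_div_iff₀ (by positivity : (0:ℝ) < δ ^ 2)]
          have hcv2 : δ ^ 2 ≤ CV ^ 2 := by nlinarith
          have hcv4 : CV ^ 2 ≤ CV ^ 4 * ‖w'‖ ^ 2 := by nlinarith [sq_nonneg (CV * ‖w'‖ - 1)]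
          have hA : (0:ℝ) ≤ CV ^ 4 * ‖w'‖ ^ 2 := by positivity
          have e2 : (1:ℝ) ≤ Cα * (dδ : ℝ) ^ ((3:ℝ)/2) := by nlinarith
          calc εα * δ ^ 2 ≤ εα * (CV ^ 4 * ‖w'‖ ^ 2) := by nlinarith
          _ = 1 * (εα * (CV ^ 4 * ‖w'‖ ^ 2)) := by ring
          _ ≤ (Cα * (dδ : ℝ) ^ ((3:ℝ)/2)) * (εα * (CV ^ 4 * ‖w'‖ ^ 2)) :=
            mul_le_mul_of_nonneg_right e2 (mul_nonneg hεα hA)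
          _ = Cα * CV ^ 4 * (dδ : ℝ) ^ ((3:ℝ)/2) * ‖w'‖ ^ 2 * εα := by ring
        nlinarith [mul_nonneg (mul_nonneg (le_of_lt hs0) (le_of_lt hδ)) (le_of_lt hw'0)]
      calc |αhat i - α i| ≤ εα := hαdiff i h2 hid
      _ ≤ εδ := hεαεδ
      _ ≤ 2 * Cα * εδ := by nlinarith [mul_nonneg hεδ0 (by linarith : (0:ℝ) ≤ 2 * Cα - 1)]
    · -- δ > CV, so εδ ≥ 1
      have h1εδ : 1 ≤ εδ := by
        rw [hεδdef]
        have e1 : 1 < δ * ‖w'‖ := by nlinarith [mul_pos (sub_pos.mpr hcase) hw'0]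
        have hterm2' : 1 ≤ s * δ * ‖w'‖ := by
          nlinarith [e1, mul_nonneg (by linarith : (0:ℝ) ≤ s - 1)
            (mul_nonneg (le_of_lt hδ) (le_of_lt hw'0))]
        linarith
      obtain ⟨ha1, ha2⟩ := hα i h2 hid
      obtain ⟨hb1, hb2⟩ := hαhat i h2 hid
      have : |αhat i - α i| ≤ 2 * Cα := abs_le.mpr ⟨by linarith, by linarith⟩
      nlinarith
  -- inner products with V i
  have hVi_what : ∀ i, 2 ≤ i → i ≤ d → ⟪what, V i⟫ = αhat i := by
    intro i h2 hid
    have h := hw2 i h2 hid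
    rw [inner_sub_left, real_inner_smul_left, hw1] at h
    rw [real_inner_comm]
    linarith
  have hVi_w' : ∀ i, 2 ≤ i → i ≤ d → ⟪w', V i⟫ = α i := by
    intro i h2 hid
    have h := hw'2 i h2 hid
    rw [inner_sub_left, real_inner_smul_left, hw'1] at h
    rw [real_inner_comm]
    linarith
  have hVi_wδ : ∀ i, 2 ≤ i → i ≤ dδ → ⟪whatδ, V i⟫ = αhat i := by
    intro i h2 hid
    have h := hwδ2 i h2 hid
    rw [inner_sub_left, real_inner_smul_left, hwδ1] at h
    rw [real_inner_comm]
    linarith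
  -- F j := difference of inner products with V j
  set F : ℕ → ℝ := fun j => ⟪what, V j⟫ - ⟪whatδ, V j⟫ with hF
  have hF0 : ∀ j, 1 ≤ j → j ≤ dδ → F j = 0 := by
    intro j h1 h2
    rcases eq_or_lt_of_le h1 with h | h
    · simp only [hF, ← h]
      rw [real_inner_comm (V 1) what, real_inner_comm (V 1) whatδ, hw1, hwδ1]
      ring
    · have h2' : 2 ≤ j := h
      simp only [hF]
      rw [hVi_what j h2' (le_trans h2 hdδd), hVi_wδ j h2' h2]
      ring
  have hFbd : ∀ i, dδ < i → i ≤ d → |F i| ≤ 3 * Cα * εδ := by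
    intro i h1 h2
    have h2' : 2 ≤ i := by omega
    have hVi𝒱 : V i ∈ 𝒱 := hV i (by omega) h2
    have hδv := hwδv (V i) hVi𝒱
    have : F i = (αhat i - α i) + (⟪w', V i⟫ - ⟪whatδ, V i⟫) := by
      simp only [hF]
      rw [hVi_what i h2' h2, hVi_w' i h2' h2]
      ring
    rw [this]
    have habs : |⟪w', V i⟫ - ⟪whatδ, V i⟫| ≤ εδ := by
      rw [abs_sub_comm]
      exact hδv
    calc |(αhat i - α i) + (⟪w', V i⟫ - ⟪whatδ, V i⟫)|
        ≤ |αhat i - α i| + |⟪w', V i⟫ - ⟪whatδ, V i⟫| := abs_add_le _ _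
      _ ≤ 2 * Cα * εδ + εδ := add_le_add (hαbd i h2' h2) habs
      _ ≤ 3 * Cα * εδ := by nlinarith
  -- decomposition of v
  have hrange : V '' Set.Icc 1 d = Set.range (fun j : Fin d => V (j.val + 1)) := by
    ext y
    constructor
    · rintro ⟨n, ⟨hn1, hn2⟩, rfl⟩
      obtain ⟨m, rfl⟩ : ∃ m, n = m + 1 := ⟨n - 1, by omega⟩
      exact ⟨⟨m, by omega⟩, rfl⟩
    · rintro ⟨j, rfl⟩
      exact ⟨j.val + 1, ⟨by omega, by omega⟩, rfl⟩
  have hv' : v ∈ Submodule.span ℝ (Set.range (fun j : Fin d => V (j.val + 1))) := by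
    rw [← hrange]; exact hVspan v hv
  obtain ⟨c, hc⟩ := Submodule.mem_span_range_iff_exists_fun ℝ |>.mp hv'
  set c' : ℕ → ℝ := fun j => if h : j < d then c ⟨j, h⟩ else 0 with hc'
  have hvsum : v = ∑ j ∈ Finset.range d, c' j • V (j + 1) := by
    rw [← hc, ← Fin.sum_univ_eq_sum_range (fun j => c' j • V (j + 1)) d]
    apply Finset.sum_congr rfl
    intro i _
    simp [hc']
  -- geometric sum identity
  have hgeom : ∀ i, i ≤ d → s * ∑ j ∈ Finset.Ico i d, x ^ (d - 1 - j) = x ^ (d - i) - 1 := by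
    intro i hid
    have h1 : ∑ j ∈ Finset.Ico i d, x ^ (d - 1 - j)
        = ∑ m ∈ Finset.range (d - i), x ^ (d - 1 - (i + m)) :=
      Finset.sum_Ico_eq_sum_range _ _ _
    have h2 : ∑ m ∈ Finset.range (d - i), x ^ (d - 1 - (i + m))
        = ∑ m ∈ Finset.range (d - i), x ^ ((d - i) - 1 - m) := by
      apply Finset.sum_congr rfl
      intro m hm
      congr 1
      have := Finset.mem_range.mp hm
      omega
    rw [h1, h2, Finset.sum_range_reflect (fun m => x ^ m) (d - i)]
    have := geom_sum_mul x (d - i)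
    have hxs : x - 1 = s := by simp [hx]
    rw [hxs] at this
    linarith [this]
  -- the key coefficient bound
  have step : ∀ i, dδ < i → i ≤ d →
      (∀ j ∈ Finset.Ico i d, |c' j| ≤ s * x ^ (d - 1 - j)) →
      |c' (i - 1)| ≤ s * x ^ (d - i) := by
    intro i hi1 hi2 htail
    obtain ⟨i', rfl⟩ : ∃ i', i = i' + 1 := ⟨i - 1, by omega⟩
    set i := i' + 1 with hidef
    have hρ : 0 < ⟪V i, ψ i⟫ := hψpos i hi1 hi2
    set ρ : ℝ := ⟪V i, ψ i⟫ with hρdef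
    have hsum0 : ⟪v, ψ i⟫ = ∑ j ∈ Finset.range d, c' j * ⟪V (j + 1), ψ i⟫ := by
      conv_lhs => rw [hvsum]
      rw [sum_inner]
      apply Finset.sum_congr rfl
      intro j _
      rw [real_inner_smul_left]
    have hsplit : ∑ j ∈ Finset.range d, c' j * ⟪V (j + 1), ψ i⟫
        = (∑ j ∈ Finset.range i, c' j * ⟪V (j + 1), ψ i⟫)
          + ∑ j ∈ Finset.Ico i d, c' j * ⟪V (j + 1), ψ i⟫ :=
      (Finset.sum_range_add_sum_Ico _ hi2).symm
    have hzero : ∑ j ∈ Finset.range i', c' j * ⟪V (j + 1), ψ i⟫ = 0 := by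
      apply Finset.sum_eq_zero
      intro j hj
      have hj' := Finset.mem_range.mp hj
      have h0 : ⟪ψ i, V (j + 1)⟫ = 0 := hψorth i hi1 hi2 (j + 1) (by omega) (by omega)
      rw [real_inner_comm] at h0
      rw [h0, mul_zero]
    have hhead : ∑ j ∈ Finset.range i, c' j * ⟪V (j + 1), ψ i⟫ = c' i' * ρ := by
      rw [hidef, Finset.sum_range_succ, hzero, zero_add]
    have hkey : c' i' * ρ = ⟪v, ψ i⟫ - ∑ j ∈ Finset.Ico i d, c' j * ⟪V (j + 1), ψ i⟫ := by
      rw [hsum0, hsplit, hhead]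
      ring
    -- bound the tail sum termwise
    have htermbd : ∀ j ∈ Finset.Ico i d,
        |c' j * ⟪V (j + 1), ψ i⟫| ≤ (s * x ^ (d - 1 - j)) * (s * ρ) := by
      intro j hj
      obtain ⟨hj1, hj2⟩ := Finset.mem_Ico.mp hj
      have hVj : V (j + 1) ∈ 𝒱 := hV (j + 1) (by omega) (by omega)
      have hb : |⟪V (j + 1), ψ i⟫| ≤ s * ρ := by
        have := hψbd i hi1 hi2 (V (j + 1)) hVj
        rwa [abs_of_pos hρ] at this
      rw [abs_mul]
      exact mul_le_mul (htail j hj) hb (abs_nonneg _)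
        (mul_nonneg (le_of_lt hs0) (by positivity))
    have hvbd : |⟪v, ψ i⟫| ≤ s * ρ := by
      have := hψbd i hi1 hi2 v hv
      rwa [abs_of_pos hρ] at this
    have hsumIco : ∑ j ∈ Finset.Ico i d, (s * x ^ (d - 1 - j)) * (s * ρ)
        = (s * ρ) * (s * ∑ j ∈ Finset.Ico i d, x ^ (d - 1 - j)) := by
      rw [Finset.mul_sum, Finset.mul_sum]
      apply Finset.sum_congr rfl
      intro j _
      ring
    have hgm := hgeom i hi2
    have hmain : |c' i'| * ρ ≤ s * ρ * x ^ (d - i) := by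
      calc |c' i'| * ρ = |c' i' * ρ| := by rw [abs_mul, abs_of_pos hρ]
      _ = |⟪v, ψ i⟫ - ∑ j ∈ Finset.Ico i d, c' j * ⟪V (j + 1), ψ i⟫| := by rw [hkey]
      _ ≤ |⟪v, ψ i⟫| + |∑ j ∈ Finset.Ico i d, c' j * ⟪V (j + 1), ψ i⟫| := abs_sub _ _
      _ ≤ |⟪v, ψ i⟫| + ∑ j ∈ Finset.Ico i d, |c' j * ⟪V (j + 1), ψ i⟫| := by
          gcongr
          exact Finset.abs_sum_le_sum_abs _ _
      _ ≤ s * ρ + ∑ j ∈ Finset.Ico i d, (s * x ^ (d - 1 - j)) * (s * ρ) :=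
          add_le_add hvbd (Finset.sum_le_sum htermbd)
      _ = s * ρ + (s * ρ) * (s * ∑ j ∈ Finset.Ico i d, x ^ (d - 1 - j)) := by rw [hsumIco]
      _ = s * ρ + (s * ρ) * (x ^ (d - i) - 1) := by rw [hgm]
      _ = s * ρ * x ^ (d - i) := by ring
    have : |c' i'| ≤ s * x ^ (d - i) := by
      have h := hmain
      rw [show s * ρ * x ^ (d - i) = (s * x ^ (d - i)) * ρ by ring] at h
      exact le_of_mul_le_mul_right h hρ
    simpa [hidef] using this
  have key : ∀ t : ℕ, ∀ i, dδ < i → i ≤ d → d - i ≤ t →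
      |c' (i - 1)| ≤ s * x ^ (d - i) := by
    intro t
    induction t with
    | zero =>
      intro i hi1 hi2 hit
      apply step i hi1 hi2
      intro j hj
      obtain ⟨hj1, hj2⟩ := Finset.mem_Ico.mp hj
      omega
    | succ t IH =>
      intro i hi1 hi2 hit
      apply step i hi1 hi2
      intro j hj
      obtain ⟨hj1, hj2⟩ := Finset.mem_Ico.mp hj
      have := IH (j + 1) (by omega) (by omega) (by omega)
      simpa [show d - (j + 1) = d - 1 - j by omega] using this
  -- final assembly
  have hzv : ⟪what, v⟫ - ⟪whatδ, v⟫ = ∑ j ∈ Finset.range d, c' j * F (j + 1) := by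
    conv_lhs => rw [hvsum]
    rw [inner_sum, inner_sum, ← Finset.sum_sub_distrib]
    apply Finset.sum_congr rfl
    intro j _
    simp only [hF]
    rw [real_inner_smul_right, real_inner_smul_right]
    ring
  have hrestrict : ∑ j ∈ Finset.range d, c' j * F (j + 1)
      = ∑ j ∈ Finset.Ico dδ d, c' j * F (j + 1) := by
    symm
    apply Finset.sum_subset
    · intro j hj
      obtain ⟨hj1, hj2⟩ := Finset.mem_Ico.mp hj
      exact Finset.mem_range.mpr hj2
    · intro j hj hj'
      have hj2 := Finset.mem_range.mp hj
      have : j < dδ := by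
        by_contra hcon
        exact hj' (Finset.mem_Ico.mpr ⟨by omega, hj2⟩)
      rw [hF0 (j + 1) (by omega) (by omega), mul_zero]
  have htermbd2 : ∀ j ∈ Finset.Ico dδ d,
      |c' j * F (j + 1)| ≤ (s * x ^ (d - 1 - j)) * (3 * Cα * εδ) := by
    intro j hj
    obtain ⟨hj1, hj2⟩ := Finset.mem_Ico.mp hj
    have hcbd : |c' j| ≤ s * x ^ (d - 1 - j) := by
      have := key d (j + 1) (by omega) (by omega) (by omega)
      simpa [show d - (j + 1) = d - 1 - j by omega] using this
    have hFbd' : |F (j + 1)| ≤ 3 * Cα * εδ := hFbd (j + 1) (by omega) (by omega)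
    rw [abs_mul]
    exact mul_le_mul hcbd hFbd' (abs_nonneg _)
      (mul_nonneg (le_of_lt hs0) (by positivity))
  have hfinal : |⟪what, v⟫ - ⟪whatδ, v⟫| ≤ (3 * Cα * εδ) * (s * ∑ j ∈ Finset.Ico dδ d, x ^ (d - 1 - j)) := by
    rw [hzv, hrestrict]
    calc |∑ j ∈ Finset.Ico dδ d, c' j * F (j + 1)|
        ≤ ∑ j ∈ Finset.Ico dδ d, |c' j * F (j + 1)| := Finset.abs_sum_le_sum_abs _ _
      _ ≤ ∑ j ∈ Finset.Ico dδ d, (s * x ^ (d - 1 - j)) * (3 * Cα * εδ) :=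
          Finset.sum_le_sum htermbd2
      _ = (3 * Cα * εδ) * (s * ∑ j ∈ Finset.Ico dδ d, x ^ (d - 1 - j)) := by
          rw [Finset.mul_sum, Finset.mul_sum]
          apply Finset.sum_congr rfl
          intro j _
          ring
  rw [hgeom dδ hdδd] at hfinal
  have hxpow : (0:ℝ) ≤ x ^ (d - dδ) := by positivity
  have h3 : (0:ℝ) ≤ 3 * Cα * εδ := by positivity
  calc |⟪what, v⟫ - ⟪whatδ, v⟫| ≤ (3 * Cα * εδ) * (x ^ (d - dδ) - 1) := hfinal
  _ ≤ (3 * Cα * εδ) * x ^ (d - dδ) := by nlinarith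
  _ = 3 * x ^ (d - dδ) * Cα * εδ := by ring
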